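/- Let C ⊆ ℤ/mℤ be symmetric (C = -C) with |C| > m^{(k-2)/(k-1)}. Then the number of pairs ((y₁,...,y_k),(z₁,...,z_k)) ∈ C^k × C^k satisfying y_i + y_{i+2} - 2y_{i+1} ≡ z_i + z_{i+2} - 2z_{i+1} (mod m) for all i = 1,...,k-2 strictly exceeds |C|^{k+1}. -/

import Mathlib

open Classical in
theorem solution_count_exceeds_trivial (m k : ℕ) (hm : 0 < m) (hk : 3 ≤ k)
    (C : Finset (ZMod m)) (hsym : ∀ c ∈ C, -c ∈ C)
    (hcard : m ^ (k - 2) < C.card ^ (k - 1)) :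
    C.card ^ (k + 1) <
      (((Fintype.piFinset fun _ : Fin k => C) ×ˢ (Fintype.piFinset fun _ : Fin k => C)).filter
        (fun p => ∀ i : Fin k, ∀ h : (i : ℕ) + 2 < k,
          p.1 i + p.1 ⟨i + 2, h⟩ - 2 * p.1 ⟨i + 1, by omega⟩ =
            p.2 i + p.2 ⟨i + 2, h⟩ - 2 * p.2 ⟨i + 1, by omega⟩)).card := by
  haveI : NeZero m := ⟨hm.ne'⟩
  set A := Fintype.piFinset fun _ : Fin k => C with hA
  set F : (Fin k → ZMod m) → (Fin (k - 2) → ZMod m) := fun y j =>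
    y ⟨j, by have := j.isLt; omega⟩ + y ⟨(j : ℕ) + 2, by have := j.isLt; omega⟩
      - 2 * y ⟨(j : ℕ) + 1, by have := j.isLt; omega⟩ with hFdef
  -- rewrite the filter condition
  have hfilter : ((A ×ˢ A).filter
        (fun p => ∀ i : Fin k, ∀ h : (i : ℕ) + 2 < k,
          p.1 i + p.1 ⟨i + 2, h⟩ - 2 * p.1 ⟨i + 1, by omega⟩ =
            p.2 i + p.2 ⟨i + 2, h⟩ - 2 * p.2 ⟨i + 1, by omega⟩)) =
      ((A ×ˢ A).filter (fun p => F p.1 = F p.2)) := by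
    apply Finset.filter_congr
    intro p _
    simp only [hFdef]
    constructor
    · intro hp
      funext j
      have h2 : ((⟨(j : ℕ), by have := j.isLt; omega⟩ : Fin k) : ℕ) + 2 < k := by
        have := j.isLt; simp; omega
      have := hp ⟨(j : ℕ), by have := j.isLt; omega⟩ h2
      simpa using this
    · intro hp i h
      have hj : (i : ℕ) < k - 2 := by omega
      have := congrFun hp ⟨(i : ℕ), hj⟩
      simpa using this
  rw [hfilter]
  -- decompose into fibers
  have hdecomp : ((A ×ˢ A).filter (fun p => F p.1 = F p.2)) =
      Finset.univ.biUnion (fun d : Fin (k - 2) → ZMod m =>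
        (A.filter (fun y => F y = d)) ×ˢ (A.filter (fun y => F y = d))) := by
    ext p
    simp only [Finset.mem_filter, Finset.mem_product, Finset.mem_biUnion, Finset.mem_univ,
      true_and]
    constructor
    · rintro ⟨⟨h1, h2⟩, h3⟩
      exact ⟨F p.1, ⟨h1, rfl⟩, ⟨h2, h3.symm⟩⟩
    · rintro ⟨d, ⟨h1, h1'⟩, ⟨h2, h2'⟩⟩
      exact ⟨⟨h1, h2⟩, by rw [h1', h2']⟩
  have hcardsum : ((A ×ˢ A).filter (fun p => F p.1 = F p.2)).card =
      ∑ d : Fin (k - 2) → ZMod m, (A.filter (fun y => F y = d)).card ^ 2 := by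
    rw [hdecomp, Finset.card_biUnion]
    · simp [Finset.card_product, sq]
    · intro d₁ _ d₂ _ hne
      simp only [Finset.disjoint_left]
      rintro p hp hp'
      simp only [Finset.mem_product, Finset.mem_filter] at hp hp'
      exact hne (hp.1.2 ▸ hp'.1.2.symm ▸ rfl)
  -- total mass
  have hmass : ∑ d : Fin (k - 2) → ZMod m, (A.filter (fun y => F y = d)).card = C.card ^ k := by
    rw [← Finset.card_eq_sum_card_fiberwise (fun y _ => Finset.mem_univ (F y))]
    simp [hA, Fintype.card_piFinset]
  -- Cauchy-Schwarz over ℤ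
  have hcs : ((C.card : ℤ) ^ k) ^ 2 ≤ (m : ℤ) ^ (k - 2) *
      ∑ d : Fin (k - 2) → ZMod m, ((A.filter (fun y => F y = d)).card : ℤ) ^ 2 := by
    have := sq_sum_le_card_mul_sum_sq (s := (Finset.univ : Finset (Fin (k - 2) → ZMod m)))
      (f := fun d => ((A.filter (fun y => F y = d)).card : ℤ))
    have hcardu : ((Finset.univ : Finset (Fin (k - 2) → ZMod m)).card : ℤ) = (m : ℤ) ^ (k - 2) := by
      simp [Finset.card_univ, ZMod.card]
    rw [hcardu] at this
    calc ((C.card : ℤ) ^ k) ^ 2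
        = (∑ d : Fin (k - 2) → ZMod m, ((A.filter (fun y => F y = d)).card : ℤ)) ^ 2 := by
          rw [← Nat.cast_sum, hmass]; push_cast; ring
      _ ≤ _ := this
  have hN : (C.card ^ k) ^ 2 ≤ m ^ (k - 2) * ((A ×ˢ A).filter (fun p => F p.1 = F p.2)).card := by
    have : ((C.card ^ k : ℕ) ^ 2 : ℤ) ≤
        ((m ^ (k - 2) * ((A ×ˢ A).filter (fun p => F p.1 = F p.2)).card : ℕ) : ℤ) := by
      push_cast
      rw [hcardsum]
      push_cast
      exact hcs
    exact_mod_cast this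
  -- conclude
  have hCpos : 0 < C.card := by
    rcases Nat.eq_zero_or_pos C.card with h | h
    · rw [h, zero_pow (by omega : k - 1 ≠ 0)] at hcard; omega
    · exact h
  have key : C.card ^ (k + 1) * m ^ (k - 2) < (C.card ^ k) ^ 2 := by
    have : (C.card ^ k) ^ 2 = C.card ^ (k + 1) * C.card ^ (k - 1) := by
      rw [← pow_mul, ← pow_add]
      congr 1
      omega
    rw [this]
    exact Nat.mul_lt_mul_of_le_of_lt (le_refl _) hcard (Nat.pow_pos hCpos)
  have hmp : 0 < m ^ (k - 2) := Nat.pow_pos hm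
  have := lt_of_lt_of_le key hN
  rw [mul_comm] at this
  exact lt_of_mul_lt_mul_left this (Nat.zero_le _)
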